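/- Assume f is convex, differentiable, and ∇f is L-Lipschitz on ℝⁿ. Let a, b ≥ 0, λ_max > 0, 0 < λ ≤ λ_max, x, g ∈ ℝⁿ, x⁺ = prox_{λh}(x − λg), and G = λ⁻¹(x − x⁺). Suppose ‖g − ∇f(x)‖ ≤ (a + bλ)‖G‖, and let x* ∈ ℝⁿ and B₂ ≥ ‖x⁺ − x*‖. Then, with F = f + h, F(x⁺) − F(x*) ≤ B₂((L + b)λ_max + a + 1)‖G‖. -/

import Mathlib

open RealInnerProductSpace

section aux

variable {n : ℕ}

local notation "E" => EuclideanSpace ℝ (Fin n)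

/-- Gradient inequality for convex differentiable functions. -/
lemma conv_grad_ineq {f : EuclideanSpace ℝ (Fin n) → ℝ}
    (hf : Differentiable ℝ f) (hconv : ConvexOn ℝ Set.univ f)
    (x y : EuclideanSpace ℝ (Fin n)) :
    f x + ⟪gradient f x, y - x⟫ ≤ f y := by
  set v : E := y - x with hv
  have hcurve : HasDerivAt (fun t : ℝ => x + t • v) v 0 := by
    simpa using ((hasDerivAt_id (0:ℝ)).smul_const v).const_add x
  have hfd : HasFDerivAt f (InnerProductSpace.toDual ℝ E (gradient f x)) x :=
    (hf x).hasGradientAt.hasFDerivAt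
  have hcomp : HasDerivAt (fun t : ℝ => f (x + t • v)) ⟪gradient f x, v⟫ 0 := by
    have hfd' : HasFDerivAt f (InnerProductSpace.toDual ℝ (EuclideanSpace ℝ (Fin n))
        (gradient f x)) ((fun t : ℝ => x + t • v) 0) := by simpa using hfd
    have := hfd'.comp_hasDerivAt (0:ℝ) hcurve
    simpa [InnerProductSpace.toDual_apply_apply, Function.comp_def] using this
  have hslope := hasDerivAt_iff_tendsto_slope.mp hcomp
  have hslope' : Filter.Tendsto (slope (fun t : ℝ => f (x + t • v)) 0)
      (nhdsWithin 0 (Set.Ioi 0)) (nhds ⟪gradient f x, v⟫) :=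
    hslope.mono_left (nhdsWithin_mono _ (fun t ht => ne_of_gt ht))
  have hev : ∀ᶠ t in nhdsWithin (0:ℝ) (Set.Ioi 0),
      slope (fun t : ℝ => f (x + t • v)) 0 t ≤ f y - f x := by
    filter_upwards [Ioc_mem_nhdsGT_of_mem (by norm_num : (0:ℝ) ∈ Set.Ico 0 1)] with t ht
    have h1 : f (x + t • v) ≤ (1 - t) * f x + t * f y := by
      have := hconv.2 (Set.mem_univ x) (Set.mem_univ y)
        (by linarith [ht.2] : (0:ℝ) ≤ 1 - t) ht.1.le (by ring)
      have heq : (1 - t) • x + t • y = x + t • v := by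
        simp [hv, smul_sub, sub_smul]; abel
      simpa [heq] using this
    have ht0 : 0 < t := ht.1
    simp only [slope_def_field, zero_smul, add_zero, sub_zero]
    rw [div_le_iff₀ ht0]
    nlinarith [h1]
  have := le_of_tendsto hslope' hev
  linarith

/-- Subgradient inequality at the prox point. -/
lemma prox_subgrad {h : EuclideanSpace ℝ (Fin n) → ℝ}
    (hconv : ConvexOn ℝ Set.univ h) {lam : ℝ} (hlam : 0 < lam)
    {u p : EuclideanSpace ℝ (Fin n)}
    (hmin : ∀ y : EuclideanSpace ℝ (Fin n),
      1 / (2 * lam) * ‖p - u‖ ^ 2 + h p ≤ 1 / (2 * lam) * ‖y - u‖ ^ 2 + h y)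
    (y : EuclideanSpace ℝ (Fin n)) :
    ⟪u - p, y - p⟫ ≤ lam * (h y - h p) := by
  set C : ℝ := ‖y - p‖ ^ 2 with hC
  have key : ∀ t : ℝ, t ∈ Set.Ioc (0:ℝ) 1 →
      ⟪u - p, y - p⟫ - lam * (h y - h p) ≤ (t / 2) * C := by
    intro t ht
    have ht0 : 0 < t := ht.1
    have hy := hmin (p + t • (y - p))
    have hhc : h (p + t • (y - p)) ≤ (1 - t) * h p + t * h y := by
      have := hconv.2 (Set.mem_univ p) (Set.mem_univ y)
        (by linarith [ht.2] : (0:ℝ) ≤ 1 - t) ht0.le (by ring)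
      have heq : (1 - t) • p + t • y = p + t • (y - p) := by
        simp [smul_sub, sub_smul]; abel
      simpa [heq] using this
    have hnorm : ‖p + t • (y - p) - u‖ ^ 2
        = ‖p - u‖ ^ 2 + 2 * t * ⟪p - u, y - p⟫ + t ^ 2 * C := by
      have h1 : p + t • (y - p) - u = (p - u) + t • (y - p) := by abel
      rw [h1, @norm_add_sq_real]
      rw [real_inner_smul_right, norm_smul]
      simp [hC, mul_pow, abs_of_pos ht0]
      ring
    rw [hnorm] at hy
    have hinner : ⟪u - p, y - p⟫ = - ⟪p - u, y - p⟫ := by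
      rw [← inner_neg_left]; congr 1; abel
    have hlam' : 0 < 2 * lam := by linarith
    have hexp : 1 / (2 * lam) * (‖p - u‖ ^ 2 + 2 * t * ⟪p - u, y - p⟫ + t ^ 2 * C)
        = 1 / (2 * lam) * ‖p - u‖ ^ 2 + (t / lam) * ⟪p - u, y - p⟫
          + t ^ 2 / (2 * lam) * C := by field_simp
    rw [hexp] at hy
    rw [hinner]
    obtain ⟨I, hI⟩ : ∃ I : ℝ, ⟪p - u, y - p⟫ = I := ⟨_, rfl⟩
    rw [hI] at hy ⊢
    have ht' : t ≠ 0 := ne_of_gt ht0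
    have hl' : lam ≠ 0 := ne_of_gt hlam
    have hfrac : (t / lam) * (I + (t / 2) * C + lam * (h y - h p))
        = t / lam * I + t ^ 2 / (2 * lam) * C + t * (h y - h p) := by
      field_simp
    have h2 : 0 ≤ (t / lam) * (I + (t / 2) * C + lam * (h y - h p)) := by
      rw [hfrac]; nlinarith [hhc, hy]
    have h3 : 0 ≤ I + (t / 2) * C + lam * (h y - h p) :=
      nonneg_of_mul_nonneg_right (by linarith [h2]) (by positivity : (0:ℝ) < t / lam)
    linarith
  by_contra hcon
  push_neg at hcon
  set D : ℝ := ⟪u - p, y - p⟫ - lam * (h y - h p) with hD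
  have hD0 : 0 < D := sub_pos.mpr hcon
  have hC0 : 0 ≤ C := by positivity
  -- pick t small
  set t : ℝ := min 1 (D / (C + 1)) with htdef
  have htpos : 0 < t := lt_min one_pos (by positivity)
  have ht1 : t ≤ 1 := min_le_left _ _
  have h4 := key t ⟨htpos, ht1⟩
  have h5 : (t / 2) * C < D := by
    have h6 : t ≤ D / (C + 1) := min_le_right _ _
    have h7 : t * C ≤ D / (C + 1) * C := mul_le_mul_of_nonneg_right h6 hC0
    have h8 : D / (C + 1) * C < D := by
      rw [div_mul_eq_mul_div, div_lt_iff₀ (by linarith)]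
      nlinarith
    nlinarith
  linarith

end aux

/-- bound on the optimality gap in terms of the gradient-mapping norm
in the convex case with relative gradient inexactness. -/
theorem stmt12 {n : ℕ}
    (f h : EuclideanSpace ℝ (Fin n) → ℝ)
    (hconv : ConvexOn ℝ Set.univ h)
    (hfconv : ConvexOn ℝ Set.univ f)
    (hf : Differentiable ℝ f)
    (L : ℝ) (hL : 0 < L)
    (hlip : ∀ u v : EuclideanSpace ℝ (Fin n),
      ‖gradient f u - gradient f v‖ ≤ L * ‖u - v‖)
    (prox : ℝ → EuclideanSpace ℝ (Fin n) → EuclideanSpace ℝ (Fin n))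
    (hprox : ∀ lam : ℝ, 0 < lam → ∀ u y : EuclideanSpace ℝ (Fin n),
      1 / (2 * lam) * ‖prox lam u - u‖ ^ 2 + h (prox lam u)
        ≤ 1 / (2 * lam) * ‖y - u‖ ^ 2 + h y)
    (a b lamMax : ℝ) (ha : 0 ≤ a) (hb : 0 ≤ b) (hlamMax : 0 < lamMax)
    (lam : ℝ) (hlam0 : 0 < lam) (hlam1 : lam ≤ lamMax)
    (x g : EuclideanSpace ℝ (Fin n))
    (xp : EuclideanSpace ℝ (Fin n)) (hxp : xp = prox lam (x - lam • g))
    (G : EuclideanSpace ℝ (Fin n)) (hG : G = lam⁻¹ • (x - xp))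
    (hgrad : ‖g - gradient f x‖ ≤ (a + b * lam) * ‖G‖)
    (xstar : EuclideanSpace ℝ (Fin n)) (B2 : ℝ) (hB2 : ‖xp - xstar‖ ≤ B2)
    (F : EuclideanSpace ℝ (Fin n) → ℝ) (hF : ∀ y, F y = f y + h y) :
    F xp - F xstar ≤ B2 * ((L + b) * lamMax + a + 1) * ‖G‖ := by
  have hxG : x - xp = lam • G := by
    rw [hG, smul_smul, mul_inv_cancel₀ (ne_of_gt hlam0), one_smul]
  -- prox subgradient at xp with u = x - lam • g, evaluated at xstar
  have hsub : ⟪(x - lam • g) - xp, xstar - xp⟫ ≤ lam * (h xstar - h xp) := by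
    have hmin : ∀ y : EuclideanSpace ℝ (Fin n),
        1 / (2 * lam) * ‖xp - (x - lam • g)‖ ^ 2 + h xp
          ≤ 1 / (2 * lam) * ‖y - (x - lam • g)‖ ^ 2 + h y := by
      intro y; rw [hxp]; exact hprox lam hlam0 (x - lam • g) y
    exact prox_subgrad hconv hlam0 hmin xstar
  have hu : (x - lam • g) - xp = lam • (G - g) := by
    rw [smul_sub, ← hxG]; abel
  rw [hu, real_inner_smul_left] at hsub
  have hh : h xp - h xstar ≤ ⟪G - g, xp - xstar⟫ := by
    have h1 : ⟪G - g, xstar - xp⟫ ≤ h xstar - h xp :=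
      le_of_mul_le_mul_left (by linarith) hlam0
    have h2 : ⟪G - g, xp - xstar⟫ = - ⟪G - g, xstar - xp⟫ := by
      rw [← inner_neg_right]; congr 1; abel
    linarith [h2 ▸ neg_le_neg h1]
  have hfi : f xp - f xstar ≤ ⟪gradient f xp, xp - xstar⟫ := by
    have := conv_grad_ineq hf hfconv xp xstar
    have h2 : ⟪gradient f xp, xp - xstar⟫ = - ⟪gradient f xp, xstar - xp⟫ := by
      rw [← inner_neg_right]; congr 1; abel
    linarith [h2]
  -- combine
  have hcomb : F xp - F xstar ≤ ⟪gradient f xp + (G - g), xp - xstar⟫ := by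
    rw [hF, hF, inner_add_left]; linarith
  have hnorm1 : ⟪gradient f xp + (G - g), xp - xstar⟫
      ≤ ‖gradient f xp + (G - g)‖ * ‖xp - xstar‖ := real_inner_le_norm _ _
  have hGnn : (0:ℝ) ≤ ‖G‖ := norm_nonneg _
  have hsplit : ‖gradient f xp + (G - g)‖
      ≤ ((L + b) * lamMax + a + 1) * ‖G‖ := by
    have e1 : gradient f xp + (G - g)
        = (gradient f xp - gradient f x) + (gradient f x - g) + G := by abel
    have t1 : ‖gradient f xp - gradient f x‖ ≤ L * (lam * ‖G‖) := by
      have h0 := hlip xp x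
      rw [norm_sub_rev xp x, hxG, norm_smul, Real.norm_eq_abs, abs_of_pos hlam0] at h0
      exact h0
    have t2 : ‖gradient f x - g‖ ≤ (a + b * lam) * ‖G‖ := by
      rwa [norm_sub_rev] at hgrad
    calc ‖gradient f xp + (G - g)‖
        ≤ ‖gradient f xp - gradient f x‖ + ‖gradient f x - g‖ + ‖G‖ := by
          rw [e1]; exact (norm_add_le _ _).trans (by gcongr; exact norm_add_le _ _)
      _ ≤ L * (lam * ‖G‖) + (a + b * lam) * ‖G‖ + ‖G‖ := by linarith
      _ ≤ ((L + b) * lamMax + a + 1) * ‖G‖ := by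
          have hLb : (0:ℝ) ≤ L + b := by linarith
          have hkey : (L + b) * lam * ‖G‖ ≤ (L + b) * lamMax * ‖G‖ :=
            mul_le_mul_of_nonneg_right
              (mul_le_mul_of_nonneg_left hlam1 hLb) hGnn
          nlinarith [hGnn, hkey]
  have hB2nn : (0:ℝ) ≤ B2 := le_trans (norm_nonneg _) hB2
  have hfin : ‖gradient f xp + (G - g)‖ * ‖xp - xstar‖
      ≤ ((L + b) * lamMax + a + 1) * ‖G‖ * B2 := by
    apply mul_le_mul hsplit hB2 (norm_nonneg _) (by positivity)
  calc F xp - F xstar ≤ ‖gradient f xp + (G - g)‖ * ‖xp - xstar‖ :=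
        le_trans hcomb hnorm1
    _ ≤ ((L + b) * lamMax + a + 1) * ‖G‖ * B2 := hfin
    _ = B2 * ((L + b) * lamMax + a + 1) * ‖G‖ := by ring
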